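/- Let T, Z, W be metric spaces, 𝔛 ⊂ T × Z a closed subset, and Λ ≥ 1. Let ℱ_Λ(𝔛/T, W) be the set of pairs (t, f) where t ∈ T and f : 𝔛_t → W is Λ-Lipschitz (with 𝔛_t = {z : (t,z) ∈ 𝔛}), metrized by d((t,f),(t',f')) = max{d(t,t'), d_H(Γ_f, Γ_{f'})}, where Γ_f ⊂ Z × W is the graph of f and Z × W carries the sup metric. Then for any δ > 0, ℱ_Λ(𝔛/T,W) can be covered by a family of subsets each of diameter < 4δ, with the number of subsets at most ν(T,δ)·(1 + ν(W,δ))^{ν(Z, δ/Λ)}. Consequently ν(ℱ, 4δ) ≤ ν(T,δ)·(1+ν(W,δ))^{ν(Z,δ/Λ)} for any subset ℱ ⊂ ℱ_Λ(𝔛/T,W). -/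

import Mathlib

open scoped ENNReal NNReal


/-- `Y` is a γ-net for `K`: a subset of `K` at Hausdorff distance `< γ` from `K`. -/
def IsNet {α : Type*} [MetricSpace α] (γ : ℝ) (K Y : Set α) : Prop :=
  Y ⊆ K ∧ EMetric.hausdorffEdist Y K < ENNReal.ofReal γ

/-- `nu K γ` : the minimal cardinality (in `ℕ∞`) of a γ-net for `K`. -/
noncomputable def nu {α : Type*} [MetricSpace α] (K : Set α) (γ : ℝ) : ℕ∞ :=
  ⨅ (Y : Set α) (_ : IsNet γ K Y), Y.encard

lemma exists_net_finset {α : Type*} [MetricSpace α] {γ : ℝ} {n : ℕ}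
    (h : nu (Set.univ : Set α) γ ≤ (n : ℕ∞)) :
    ∃ s : Finset α, s.card ≤ n ∧ ∀ x : α, ∃ y ∈ s, edist x y < ENNReal.ofReal γ := by
  have h1 : nu (Set.univ : Set α) γ < ((n : ℕ∞) + 1) :=
    lt_of_le_of_lt h (by exact_mod_cast Nat.lt_succ_self n)
  rw [nu] at h1
  obtain ⟨Y, hY⟩ := iInf_lt_iff.mp h1
  obtain ⟨hnet, hcard⟩ := iInf_lt_iff.mp hY
  have hfin : Y.Finite := by
    rw [← Set.encard_lt_top_iff]
    exact hcard.trans_le le_top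
  refine ⟨hfin.toFinset, ?_, ?_⟩
  · have h2 : (hfin.toFinset.card : ℕ∞) < (n : ℕ∞) + 1 := by
      rwa [← Set.Finite.encard_eq_coe_toFinset_card hfin]
    have h3 : hfin.toFinset.card < n + 1 := by exact_mod_cast h2
    omega
  · intro x
    have h2 : EMetric.infEdist x Y < ENNReal.ofReal γ := by
      calc EMetric.infEdist x Y ≤ EMetric.hausdorffEdist (Set.univ : Set α) Y :=
            EMetric.infEdist_le_hausdorffEdist_of_mem (Set.mem_univ x)
        _ = EMetric.hausdorffEdist Y (Set.univ : Set α) := EMetric.hausdorffEdist_comm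
        _ < ENNReal.ofReal γ := hnet.2
    obtain ⟨y, hy, hxy⟩ := EMetric.infEdist_lt_iff.mp h2
    exact ⟨y, hfin.mem_toFinset.mpr hy, hxy⟩


/-- Arzelà–Ascoli-type covering estimate for families of
Λ-Lipschitz maps on the fibres of a closed subset `𝔛 ⊆ T × Z`, metrized via the
Hausdorff distance between graphs in `Z × W` (with the sup metric) together with
the distance of the parameters in `T`. Given nets of sizes `nT, nW, nZ` for
`T, W, Z` (at scales `δ, δ, δ/Λ`), the family is covered by at most
`nT·(1+nW)^{nZ}` sets of diameter `< 4δ`, and hence every subfamily `G` has a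
`4δ`-net of at most that many elements. -/
theorem lipschitz_family_covering (T Z W : Type*) [MetricSpace T] [MetricSpace Z]
    [MetricSpace W] (𝔛 : Set (T × Z)) (hclosed : IsClosed 𝔛)
    (Λ : NNReal) (hΛ : 1 ≤ Λ) (δ : ℝ) (hδ : 0 < δ) (nT nZ nW : ℕ)
    (hT : nu (Set.univ : Set T) δ ≤ (nT : ℕ∞))
    (hW : nu (Set.univ : Set W) δ ≤ (nW : ℕ∞))
    (hZ : nu (Set.univ : Set Z) (δ / (Λ : ℝ)) ≤ (nZ : ℕ∞)) :
    let Xt : T → Set Z := fun t => {z | (t, z) ∈ 𝔛}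
    let F : Set (T × (Z → W)) := {p | LipschitzOnWith Λ p.2 (Xt p.1)}
    let Γ : T × (Z → W) → Set (Z × W) := fun p => {q | q.1 ∈ Xt p.1 ∧ q.2 = p.2 q.1}
    let D : T × (Z → W) → T × (Z → W) → ENNReal := fun p q =>
      max (edist p.1 q.1) (EMetric.hausdorffEdist (Γ p) (Γ q))
    ∃ 𝒞 : Finset (Set (T × (Z → W))),
      (∀ p ∈ F, ∃ c ∈ 𝒞, p ∈ c) ∧
      𝒞.card ≤ nT * (1 + nW) ^ nZ ∧
      (∀ c ∈ 𝒞, ∀ p ∈ c, ∀ q ∈ c, D p q < ENNReal.ofReal (4 * δ)) ∧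
      ∀ G : Set (T × (Z → W)), G ⊆ F →
        ∃ N : Finset (T × (Z → W)), (↑N : Set (T × (Z → W))) ⊆ G ∧
          N.card ≤ nT * (1 + nW) ^ nZ ∧
          ∀ p ∈ G, ∃ q ∈ N, D p q < ENNReal.ofReal (4 * δ) := by
  classical
  intro Xt F Γ D
  have hΛR : (1 : ℝ) ≤ (Λ : ℝ) := by exact_mod_cast hΛ
  have hΛ0 : (0 : ℝ) < (Λ : ℝ) := lt_of_lt_of_le one_pos hΛR
  have hΛE : (1 : ℝ≥0∞) ≤ (Λ : ℝ≥0∞) := by exact_mod_cast hΛ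
  have hΛne : ((Λ : ℝ≥0∞)) ≠ 0 := by
    simp only [ne_eq, ENNReal.coe_eq_zero]
    exact fun h => by simp [h] at hΛ0
  have hΛtop : ((Λ : ℝ≥0∞)) ≠ ⊤ := ENNReal.coe_ne_top
  obtain ⟨sT, hsTcard, hsT⟩ := exists_net_finset hT
  obtain ⟨sW, hsWcard, hsW⟩ := exists_net_finset hW
  obtain ⟨sZ, hsZcard, hsZ⟩ := exists_net_finset hZ
  choose σT hσTmem hσT using hsT
  choose wnet hwmem hwnet using hsW
  choose ζnet hζmem hζnet using hsZ
  set r : ℝ≥0∞ := ENNReal.ofReal (δ / (Λ : ℝ)) with hr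
  have hΛmul : (Λ : ℝ≥0∞) * r = ENNReal.ofReal δ := by
    rw [hr, ← ENNReal.ofReal_coe_nnreal, ← ENNReal.ofReal_mul (by positivity)]
    rw [mul_comm, div_mul_cancel₀ _ (ne_of_gt hΛ0)]
  set C : (T × (Z → W)) → Z → Prop := fun p z => ∃ ζ ∈ Xt p.1, edist z ζ < r with hCdef
  set ζsel : (T × (Z → W)) → Z → Z := fun p z => if h : C p z then h.choose else z
    with hζseldef
  have hζsel : ∀ p z, C p z → ζsel p z ∈ Xt p.1 ∧ edist z (ζsel p z) < r := by
    intro p z h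
    simp only [hζseldef, dif_pos h]
    exact h.choose_spec
  set κ₂ : (T × (Z → W)) → Z → Option W :=
    fun p z => if (z ∈ sZ ∧ C p z) then some (wnet (p.2 (ζsel p z))) else none with hκ₂def
  have hκ₂pos : ∀ p z, z ∈ sZ → C p z → κ₂ p z = some (wnet (p.2 (ζsel p z))) := by
    intro p z h1 h2
    simp only [hκ₂def, if_pos (show z ∈ sZ ∧ C p z from ⟨h1, h2⟩)]
  have hκ₂inv : ∀ p z w, κ₂ p z = some w → z ∈ sZ ∧ C p z ∧ w = wnet (p.2 (ζsel p z)) := by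
    intro p z w hw
    simp only [hκ₂def] at hw
    split at hw
    · rename_i h
      exact ⟨h.1, h.2, (Option.some_injective _ hw).symm⟩
    · simp at hw
  -- the finite-data bound function
  set B : (T × (Z → W)) → (T × (Z → W)) → Z → ℝ≥0∞ := fun p q z =>
    if (z ∈ sZ ∧ C p z ∧ C q z) then
      (Λ : ℝ≥0∞) * max (edist z (ζsel p z)) (edist z (ζsel q z))
        + edist (p.2 (ζsel p z)) (q.2 (ζsel q z))
    else 0 with hBdef
  set M : (T × (Z → W)) → (T × (Z → W)) → ℝ≥0∞ := fun p q => sZ.sup (B p q) with hMdef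
  have hMlt : ∀ p q, κ₂ p = κ₂ q → M p q < ENNReal.ofReal (3 * δ) := by
    intro p q hpq
    have h3δ : (⊥ : ℝ≥0∞) < ENNReal.ofReal (3 * δ) := by
      simp only [bot_eq_zero, ENNReal.ofReal_pos]; linarith
    simp only [hMdef]
    refine (Finset.sup_lt_iff h3δ).mpr ?_
    intro z hz
    simp only [hBdef]
    split
    · rename_i hcond
      obtain ⟨hzs, hcp, hcq⟩ := hcond
      have h1 := hζsel p z hcp
      have h2 := hζsel q z hcq
      have hweq : wnet (p.2 (ζsel p z)) = wnet (q.2 (ζsel q z)) := by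
        have ha := hκ₂pos p z hzs hcp
        have hb := hκ₂pos q z hzs hcq
        rw [hpq] at ha
        exact Option.some_injective _ (ha.symm.trans hb)
      have hmax : (Λ : ℝ≥0∞) * max (edist z (ζsel p z)) (edist z (ζsel q z))
          < ENNReal.ofReal δ := by
        rw [← hΛmul]
        exact (ENNReal.mul_lt_mul_iff_right hΛne hΛtop).mpr (max_lt h1.2 h2.2)
      have hsum : edist (p.2 (ζsel p z)) (q.2 (ζsel q z)) < ENNReal.ofReal (2 * δ) := by
        calc edist (p.2 (ζsel p z)) (q.2 (ζsel q z))
            ≤ edist (p.2 (ζsel p z)) (wnet (p.2 (ζsel p z)))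
              + edist (wnet (p.2 (ζsel p z))) (q.2 (ζsel q z)) := edist_triangle _ _ _
          _ = edist (p.2 (ζsel p z)) (wnet (p.2 (ζsel p z)))
              + edist (q.2 (ζsel q z)) (wnet (q.2 (ζsel q z))) := by
              rw [hweq, edist_comm (wnet (q.2 (ζsel q z))) (q.2 (ζsel q z))]
          _ < ENNReal.ofReal δ + ENNReal.ofReal δ := ENNReal.add_lt_add (hwnet _) (hwnet _)
          _ = ENNReal.ofReal (2 * δ) := by
              rw [← ENNReal.ofReal_add hδ.le hδ.le]; ring_nf
      calc (Λ : ℝ≥0∞) * max (edist z (ζsel p z)) (edist z (ζsel q z))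
            + edist (p.2 (ζsel p z)) (q.2 (ζsel q z))
          < ENNReal.ofReal δ + ENNReal.ofReal (2 * δ) := ENNReal.add_lt_add hmax hsum
        _ = ENNReal.ofReal (3 * δ) := by
            rw [← ENNReal.ofReal_add hδ.le (by linarith)]; ring_nf
    · exact h3δ
  have hside : ∀ p q, p ∈ F → κ₂ p = κ₂ q →
      ∀ x ∈ Γ p, EMetric.infEdist x (Γ q) ≤ ENNReal.ofReal δ + M p q := by
    intro p q hpF hκ x hx
    have hx' : x.1 ∈ Xt p.1 ∧ x.2 = p.2 x.1 := hx
    obtain ⟨hx1, hx2⟩ := hx'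
    have hzs : ζnet x.1 ∈ sZ := hζmem x.1
    set z : Z := ζnet x.1 with hzdef
    have hz0 : edist x.1 z < r := hζnet x.1
    have hcp : C p z := ⟨x.1, hx1, by rw [edist_comm]; exact hz0⟩
    have hκq : κ₂ q z = some (wnet (p.2 (ζsel p z))) := by
      rw [← hκ]; exact hκ₂pos p z hzs hcp
    obtain ⟨-, hcq, -⟩ := hκ₂inv q z _ hκq
    have h1 := hζsel p z hcp
    have h2 := hζsel q z hcq
    have hmemΓ : ((ζsel q z, q.2 (ζsel q z)) : Z × W) ∈ Γ q := ⟨h2.1, rfl⟩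
    refine le_trans (EMetric.infEdist_le_edist_of_mem hmemΓ) ?_
    have hBz : B p q z = (Λ : ℝ≥0∞) * max (edist z (ζsel p z)) (edist z (ζsel q z))
        + edist (p.2 (ζsel p z)) (q.2 (ζsel q z)) := by
      simp only [hBdef]
      exact if_pos ⟨hzs, hcp, hcq⟩
    have hBle : B p q z ≤ M p q := Finset.le_sup hzs
    have hΛz : (Λ : ℝ≥0∞) * edist x.1 z ≤ ENNReal.ofReal δ := by
      rw [← hΛmul]; exact mul_le_mul_right hz0.le _
    have hlip : LipschitzOnWith Λ p.2 (Xt p.1) := hpF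
    have key : edist x ((ζsel q z, q.2 (ζsel q z)) : Z × W)
        ≤ (Λ : ℝ≥0∞) * edist x.1 z + B p q z := by
      rw [Prod.edist_eq]
      refine max_le ?_ ?_
      · calc edist x.1 (ζsel q z) ≤ edist x.1 z + edist z (ζsel q z) := edist_triangle _ _ _
          _ ≤ (Λ : ℝ≥0∞) * edist x.1 z + B p q z := by
              refine add_le_add (le_mul_of_one_le_left zero_le' hΛE) ?_
              rw [hBz]
              exact le_add_right (le_trans
                (le_mul_of_one_le_left zero_le' hΛE)
                (mul_le_mul_right (le_max_right _ _) _))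
      · calc edist x.2 (q.2 (ζsel q z))
            ≤ edist x.2 (p.2 (ζsel p z)) + edist (p.2 (ζsel p z)) (q.2 (ζsel q z)) :=
              edist_triangle _ _ _
          _ ≤ (Λ : ℝ≥0∞) * edist x.1 (ζsel p z)
              + edist (p.2 (ζsel p z)) (q.2 (ζsel q z)) := by
              refine add_le_add ?_ le_rfl
              rw [hx2]
              exact hlip hx1 h1.1
          _ ≤ (Λ : ℝ≥0∞) * (edist x.1 z + edist z (ζsel p z))
              + edist (p.2 (ζsel p z)) (q.2 (ζsel q z)) := by
              gcongr
              exact edist_triangle _ _ _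
          _ ≤ (Λ : ℝ≥0∞) * edist x.1 z + B p q z := by
              rw [hBz, mul_add, add_assoc]
              gcongr
              exact le_max_left _ _
    calc edist x ((ζsel q z, q.2 (ζsel q z)) : Z × W)
        ≤ (Λ : ℝ≥0∞) * edist x.1 z + B p q z := key
      _ ≤ ENNReal.ofReal δ + M p q := add_le_add hΛz hBle
  have hHaus : ∀ p q, p ∈ F → q ∈ F → κ₂ p = κ₂ q →
      EMetric.hausdorffEdist (Γ p) (Γ q) < ENNReal.ofReal (4 * δ) := by
    intro p q hp hq hκ
    have h1 := hside p q hp hκ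
    have h2 := hside q p hq hκ.symm
    have hle : EMetric.hausdorffEdist (Γ p) (Γ q)
        ≤ ENNReal.ofReal δ + max (M p q) (M q p) := by
      refine EMetric.hausdorffEdist_le_of_infEdist ?_ ?_
      · intro x hx; exact le_trans (h1 x hx) (add_le_add le_rfl (le_max_left _ _))
      · intro x hx; exact le_trans (h2 x hx) (add_le_add le_rfl (le_max_right _ _))
    refine lt_of_le_of_lt hle ?_
    have hmaxlt : max (M p q) (M q p) < ENNReal.ofReal (3 * δ) :=
      max_lt (hMlt p q hκ) (hMlt q p hκ.symm)
    calc ENNReal.ofReal δ + max (M p q) (M q p)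
        < ENNReal.ofReal δ + ENNReal.ofReal (3 * δ) :=
          ENNReal.add_lt_add_left ENNReal.ofReal_ne_top hmaxlt
      _ = ENNReal.ofReal (4 * δ) := by
          rw [← ENNReal.ofReal_add hδ.le (by linarith)]; ring_nf
  -- the covering family
  set opts : Finset (Option W) := insert none (sW.image some) with hopts
  set ext : ((z : Z) → z ∈ sZ → Option W) → (Z → Option W) :=
    fun g z => if h : z ∈ sZ then g z h else none with hext
  set A : Finset (T × (Z → Option W)) := sT ×ˢ ((sZ.pi fun _ => opts).image ext) with hA
  set 𝒞 : Finset (Set (T × (Z → W))) :=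
    A.image (fun a => {p | p ∈ F ∧ σT p.1 = a.1 ∧ κ₂ p = a.2}) with h𝒞
  have hcover : ∀ p ∈ F, ∃ c ∈ 𝒞, p ∈ c := by
    intro p hp
    refine ⟨{p' | p' ∈ F ∧ σT p'.1 = σT p.1 ∧ κ₂ p' = κ₂ p}, ?_, ⟨hp, rfl, rfl⟩⟩
    rw [h𝒞]
    refine Finset.mem_image.mpr ⟨(σT p.1, κ₂ p), ?_, rfl⟩
    rw [hA]
    refine Finset.mem_product.mpr ⟨hσTmem p.1, ?_⟩
    refine Finset.mem_image.mpr ⟨fun z _ => κ₂ p z, ?_, ?_⟩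
    · refine Finset.mem_pi.mpr fun z hz => ?_
      simp only [hκ₂def]
      split
      · exact Finset.mem_insert_of_mem (Finset.mem_image_of_mem some (hwmem _))
      · exact Finset.mem_insert_self _ _
    · funext z
      simp only [hext]
      by_cases hz : z ∈ sZ
      · simp [hz]
      · simp only [dif_neg hz]
        simp only [hκ₂def]
        rw [if_neg (fun h => hz h.1)]
  have hcard : 𝒞.card ≤ nT * (1 + nW) ^ nZ := by
    calc 𝒞.card ≤ A.card := Finset.card_image_le
      _ = sT.card * ((sZ.pi fun _ => opts).image ext).card := by
          rw [hA]; exact Finset.card_product _ _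
      _ ≤ nT * ((1 + nW) ^ nZ) := by
          refine Nat.mul_le_mul hsTcard ?_
          have h1 : opts.card ≤ 1 + nW := by
            calc opts.card ≤ (sW.image some).card + 1 := Finset.card_insert_le _ _
              _ ≤ sW.card + 1 := by
                  have := Finset.card_image_le (s := sW) (f := some); omega
              _ ≤ 1 + nW := by omega
          calc ((sZ.pi fun _ => opts).image ext).card
              ≤ (sZ.pi fun _ => opts).card := Finset.card_image_le
            _ = opts.card ^ sZ.card := by rw [Finset.card_pi, Finset.prod_const]
            _ ≤ (1 + nW) ^ sZ.card := Nat.pow_le_pow_left h1 _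
            _ ≤ (1 + nW) ^ nZ := Nat.pow_le_pow_right (by omega) hsZcard
  have hdiam : ∀ c ∈ 𝒞, ∀ p ∈ c, ∀ q ∈ c, D p q < ENNReal.ofReal (4 * δ) := by
    intro c hc p hpc q hqc
    rw [h𝒞] at hc
    obtain ⟨a, -, rfl⟩ := Finset.mem_image.mp hc
    obtain ⟨hpF, hpσ, hpκ⟩ := hpc
    obtain ⟨hqF, hqσ, hqκ⟩ := hqc
    have hκeq : κ₂ p = κ₂ q := hpκ.trans hqκ.symm
    refine max_lt ?_ (hHaus p q hpF hqF hκeq)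
    calc edist p.1 q.1 ≤ edist p.1 (σT p.1) + edist (σT p.1) q.1 := edist_triangle _ _ _
      _ = edist p.1 (σT p.1) + edist q.1 (σT q.1) := by
          rw [hpσ, ← hqσ, edist_comm (σT q.1) q.1]
      _ < ENNReal.ofReal δ + ENNReal.ofReal δ := ENNReal.add_lt_add (hσT _) (hσT _)
      _ ≤ ENNReal.ofReal (4 * δ) := by
          rw [← ENNReal.ofReal_add hδ.le hδ.le]
          exact ENNReal.ofReal_le_ofReal (by linarith)
  refine ⟨𝒞, hcover, hcard, hdiam, ?_⟩
  intro G hG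
  by_cases hGne : G.Nonempty
  · obtain ⟨p₀, hp₀⟩ := hGne
    set pick : Set (T × (Z → W)) → T × (Z → W) :=
      fun c => if h : (c ∩ G).Nonempty then h.choose else p₀ with hpick
    have hpickmem : ∀ c, (c ∩ G).Nonempty → pick c ∈ c ∩ G := by
      intro c h
      simp only [hpick, dif_pos h]
      exact h.choose_spec
    refine ⟨(𝒞.filter fun c => (c ∩ G).Nonempty).image pick, ?_, ?_, ?_⟩
    · intro x hx
      obtain ⟨c, hc, rfl⟩ := Finset.mem_image.mp (Finset.mem_coe.mp hx)
      exact (hpickmem c (Finset.mem_filter.mp hc).2).2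
    · calc ((𝒞.filter fun c => (c ∩ G).Nonempty).image pick).card
          ≤ (𝒞.filter fun c => (c ∩ G).Nonempty).card := Finset.card_image_le
        _ ≤ 𝒞.card := Finset.card_filter_le _ _
        _ ≤ nT * (1 + nW) ^ nZ := hcard
    · intro p hp
      obtain ⟨c, hc, hpc⟩ := hcover p (hG hp)
      have hne : (c ∩ G).Nonempty := ⟨p, hpc, hp⟩
      refine ⟨pick c, Finset.mem_image_of_mem pick (Finset.mem_filter.mpr ⟨hc, hne⟩), ?_⟩
      exact hdiam c hc p hpc (pick c) (hpickmem c hne).1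
  · refine ⟨∅, by simp, Nat.zero_le _, ?_⟩
    intro p hp
    exact absurd ⟨p, hp⟩ hGne
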